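/- For every n ∈ ℕ and every real x, K^{(β)}_{n,λ}(x) = Σ_{k=0}^n C(n,k) · [ Σ_{i=0}^{n−k} (−1)^i i! · B_{n−k,i}(g_1, …, g_{n−k−i+1}) ] · [x]_k. -/

import Mathlib

open Finset

/-- degenerate Krawtchouk Appell polynomials -/
noncomputable def K (lam β q r : ℝ) (n : ℕ) (x : ℝ) : ℝ :=
  iteratedDeriv n
    (fun t : ℝ => ((1 + t) / (1 + q * t)) ^ x *
      (1 + lam * r * Real.log (1 + q * t)) ^ (-β / lam)) 0

/-- derivatives at 0 of the Laplace transform composed with `log(1+qt)` -/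
noncomputable def gg (lam β q r : ℝ) (m : ℕ) : ℝ :=
  iteratedDeriv m (fun t : ℝ => (1 + lam * r * Real.log (1 + q * t)) ^ (β / lam)) 0

/-- partial exponential Bell polynomials -/
noncomputable def Bell (n k : ℕ) (x : ℕ → ℝ) : ℝ :=
  ∑ i ∈ (Fintype.piFinset fun _ : Fin (n - k + 1) => Finset.range (n + 1)).filter
      (fun i => (∑ j : Fin (n - k + 1), i j) = k ∧ (∑ j : Fin (n - k + 1), ((j : ℕ) + 1) * i j) = n),
    (n.factorial : ℝ) / (∏ j : Fin (n - k + 1), ((i j).factorial : ℝ)) *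
      ∏ j : Fin (n - k + 1), (x ((j : ℕ) + 1) / (((j : ℕ) + 1).factorial : ℝ)) ^ i j

/-- classical falling factorial -/
noncomputable def ff (y : ℝ) (m : ℕ) : ℝ := ∏ i ∈ Finset.range m, (y - i)

/-- the bracket `[y]_n` -/
noncomputable def br (q y : ℝ) (n : ℕ) : ℝ :=
  ∑ k ∈ Finset.range (n + 1), (n.choose k : ℝ) * q ^ k * ff y (n - k) * ff (-y) k

open Topology

namespace Krw

noncomputable def QQ (x : ℕ → ℝ) (N : ℕ) : Polynomial ℝ :=
  ∑ j ∈ Finset.Icc 1 N, Polynomial.C (x j / j.factorial) * Polynomial.X ^ j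

lemma QQ_coeff (x : ℕ → ℝ) (N j : ℕ) :
    (QQ x N).coeff j = if 1 ≤ j ∧ j ≤ N then x j / j.factorial else 0 := by
  rw [QQ, Polynomial.finset_sum_coeff]
  simp only [Polynomial.coeff_C_mul, Polynomial.coeff_X_pow, mul_ite, mul_one, mul_zero]
  rw [Finset.sum_ite_eq (Finset.Icc 1 N) j (fun m => x m / m.factorial)]
  simp [Finset.mem_Icc]

lemma coeff_pow_congr {A B : Polynomial ℝ} {m : ℕ} (h : ∀ j ≤ m, A.coeff j = B.coeff j)
    (k : ℕ) : ∀ j ≤ m, (A ^ k).coeff j = (B ^ k).coeff j := by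
  induction k with
  | zero => intro j hj; rfl
  | succ k ih =>
    intro j hj
    rw [pow_succ, pow_succ, Polynomial.coeff_mul, Polynomial.coeff_mul]
    refine Finset.sum_congr rfl ?_
    rintro ⟨a, b⟩ hab
    rw [Finset.HasAntidiagonal.mem_antidiagonal] at hab
    have ha : a ≤ m := le_trans (by omega) hj
    have hb : b ≤ m := le_trans (by omega) hj
    rw [ih a ha, h b hb]

lemma coeff_pow_eq_zero {A : Polynomial ℝ} (h0 : A.coeff 0 = 0) {k j : ℕ} (hjk : j < k) :
    (A ^ k).coeff j = 0 := by
  induction k generalizing j with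
  | zero => omega
  | succ k ih =>
    rw [pow_succ, Polynomial.coeff_mul]
    refine Finset.sum_eq_zero ?_
    rintro ⟨a, b⟩ hab
    rw [Finset.HasAntidiagonal.mem_antidiagonal] at hab
    rcases lt_or_ge a k with hak | hak
    · rw [ih hak, zero_mul]
    · have : b = 0 := by omega
      rw [this, h0, mul_zero]

section trans
variable {n k : ℕ}

/-- extension of a `Fin` tuple to `ℕ`, shifted by one -/
def toNat (n k : ℕ) (i : Fin (n - k + 1) → ℕ) : ℕ → ℕ :=
  fun j => if h : 1 ≤ j ∧ j ≤ n - k + 1 then i ⟨j - 1, by omega⟩ else 0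

lemma k_le_n {i : Fin (n - k + 1) → ℕ}
    (hik : (∑ j : Fin (n - k + 1), i j) = k)
    (hin : (∑ j : Fin (n - k + 1), ((j : ℕ) + 1) * i j) = n) : k ≤ n := by
  calc k = ∑ j : Fin (n - k + 1), i j := hik.symm
    _ ≤ ∑ j : Fin (n - k + 1), ((j : ℕ) + 1) * i j :=
        Finset.sum_le_sum fun j _ => Nat.le_mul_of_pos_left (i j) (Nat.succ_pos _)
    _ = n := hin

lemma trans_prod {M : Type*} [CommMonoid M] {i : Fin (n - k + 1) → ℕ}
    (hik : (∑ j : Fin (n - k + 1), i j) = k)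
    (hin : (∑ j : Fin (n - k + 1), ((j : ℕ) + 1) * i j) = n)
    (G : ℕ → ℕ → M) (hG : ∀ j, G j 0 = 1) :
    ∏ j ∈ Finset.Icc 1 n, G j (toNat n k i j) = ∏ j : Fin (n - k + 1), G ((j : ℕ) + 1) (i j) := by
  rcases Nat.eq_zero_or_pos k with hk0 | hk
  · subst hk0
    have hi0 : ∀ j, i j = 0 := fun j => Finset.sum_eq_zero_iff.mp hik j (Finset.mem_univ j)
    have hn0 : n = 0 := by
      rw [← hin]
      exact Finset.sum_eq_zero fun j _ => by rw [hi0 j, mul_zero]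
    subst hn0
    rw [show Finset.Icc 1 0 = (∅ : Finset ℕ) from rfl, Finset.prod_empty]
    exact (Finset.prod_eq_one fun j _ => by rw [hi0, hG]).symm
  · have hkn : k ≤ n := k_le_n hik hin
    have hsub : Finset.Icc 1 (n - k + 1) ⊆ Finset.Icc 1 n :=
      Finset.Icc_subset_Icc_right (by omega)
    rw [← Finset.prod_subset hsub (fun j hj hj' => by
      have hcond : ¬(1 ≤ j ∧ j ≤ n - k + 1) := by
        simp only [Finset.mem_Icc] at hj hj'; omega
      rw [toNat, dif_neg hcond, hG])]
    have h1 : Finset.Icc 1 (n - k + 1) = Finset.Ico 1 (n - k + 2) := by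
      ext j; simp only [Finset.mem_Icc, Finset.mem_Ico]; omega
    rw [h1, Finset.prod_Ico_eq_prod_range]
    have h2 : n - k + 2 - 1 = n - k + 1 := by omega
    rw [h2]
    have hR : ∏ j : Fin (n - k + 1), G ((j : ℕ) + 1) (i j)
        = ∏ l ∈ Finset.range (n - k + 1), (fun l => if h : l < n - k + 1 then
          G (l + 1) (i ⟨l, h⟩) else 1) l := by
      rw [← Fin.prod_univ_eq_prod_range]
      refine Finset.prod_congr rfl fun j _ => ?_
      rw [dif_pos j.isLt]
    rw [hR]
    refine Finset.prod_congr rfl fun l hl => ?_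
    rw [Finset.mem_range] at hl
    have hcond : 1 ≤ 1 + l ∧ 1 + l ≤ n - k + 1 := by omega
    rw [toNat, dif_pos hcond]
    have hd : (fun l => if h : l < n - k + 1 then G (l + 1) (i ⟨l, h⟩) else 1) l
        = G (l + 1) (i ⟨l, hl⟩) := dif_pos hl
    rw [hd]
    simp only [show 1 + l = l + 1 from by omega, show l + 1 - 1 = l from by omega]


lemma trans_sum {i : Fin (n - k + 1) → ℕ}
    (hik : (∑ j : Fin (n - k + 1), i j) = k)
    (hin : (∑ j : Fin (n - k + 1), ((j : ℕ) + 1) * i j) = n)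
    (G : ℕ → ℕ → ℕ) (hG : ∀ j, G j 0 = 0) :
    ∑ j ∈ Finset.Icc 1 n, G j (toNat n k i j) = ∑ j : Fin (n - k + 1), G ((j : ℕ) + 1) (i j) := by
  rcases Nat.eq_zero_or_pos k with hk0 | hk
  · subst hk0
    have hi0 : ∀ j, i j = 0 := fun j => Finset.sum_eq_zero_iff.mp hik j (Finset.mem_univ j)
    have hn0 : n = 0 := by
      rw [← hin]
      exact Finset.sum_eq_zero fun j _ => by rw [hi0 j, mul_zero]
    subst hn0
    rw [show Finset.Icc 1 0 = (∅ : Finset ℕ) from rfl, Finset.sum_empty]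
    exact (Finset.sum_eq_zero fun j _ => by rw [hi0, hG]).symm
  · have hkn : k ≤ n := k_le_n hik hin
    have hsub : Finset.Icc 1 (n - k + 1) ⊆ Finset.Icc 1 n :=
      Finset.Icc_subset_Icc_right (by omega)
    rw [← Finset.sum_subset hsub (fun j hj hj' => by
      have hcond : ¬(1 ≤ j ∧ j ≤ n - k + 1) := by
        simp only [Finset.mem_Icc] at hj hj'; omega
      rw [toNat, dif_neg hcond, hG])]
    have h1 : Finset.Icc 1 (n - k + 1) = Finset.Ico 1 (n - k + 2) := by
      ext j; simp only [Finset.mem_Icc, Finset.mem_Ico]; omega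
    rw [h1, Finset.sum_Ico_eq_sum_range]
    have h2 : n - k + 2 - 1 = n - k + 1 := by omega
    rw [h2]
    have hR : ∑ j : Fin (n - k + 1), G ((j : ℕ) + 1) (i j)
        = ∑ l ∈ Finset.range (n - k + 1), (fun l => if h : l < n - k + 1 then
          G (l + 1) (i ⟨l, h⟩) else 0) l := by
      rw [← Fin.sum_univ_eq_sum_range]
      refine Finset.sum_congr rfl fun j _ => ?_
      rw [dif_pos j.isLt]
    rw [hR]
    refine Finset.sum_congr rfl fun l hl => ?_
    rw [Finset.mem_range] at hl
    have hcond : 1 ≤ 1 + l ∧ 1 + l ≤ n - k + 1 := by omega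
    rw [toNat, dif_pos hcond]
    have hd : (fun l => if h : l < n - k + 1 then G (l + 1) (i ⟨l, h⟩) else 0) l
        = G (l + 1) (i ⟨l, hl⟩) := dif_pos hl
    rw [hd]
    simp only [show 1 + l = l + 1 from by omega, show l + 1 - 1 = l from by omega]

lemma support_bound {κ : ℕ → ℕ}
    (hsupp : ∀ j, κ j ≠ 0 → j ∈ Finset.Icc 1 n)
    (hsum : ∑ j ∈ Finset.Icc 1 n, κ j = k)
    (hw : ∑ j ∈ Finset.Icc 1 n, j * κ j = n) :
    ∀ j, n - k + 1 < j → κ j = 0 := by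
  intro j hj
  by_contra hne
  have hjmem : j ∈ Finset.Icc 1 n := hsupp j hne
  have hj1 : 1 ≤ j ∧ j ≤ n := Finset.mem_Icc.mp hjmem
  have hκ : 1 ≤ κ j := Nat.one_le_iff_ne_zero.mpr hne
  have hkn : k ≤ n := by
    calc k = ∑ l ∈ Finset.Icc 1 n, κ l := hsum.symm
    _ ≤ ∑ l ∈ Finset.Icc 1 n, l * κ l := by
        refine Finset.sum_le_sum fun l hl => ?_
        have : 1 ≤ l := (Finset.mem_Icc.mp hl).1
        exact Nat.le_mul_of_pos_left (κ l) (by omega)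
    _ = n := hw
  have hsplit : ∑ l ∈ Finset.Icc 1 n, l * κ l
      = k + ∑ l ∈ Finset.Icc 1 n, (l - 1) * κ l := by
    rw [← hsum, ← Finset.sum_add_distrib]
    refine Finset.sum_congr rfl fun l hl => ?_
    have h1l : 1 ≤ l := (Finset.mem_Icc.mp hl).1
    have h' : l * κ l = 1 * κ l + (l - 1) * κ l := by
      rw [← add_mul]; congr 1; omega
    rw [h', one_mul]
  have hsingle : (j - 1) * κ j ≤ ∑ l ∈ Finset.Icc 1 n, (l - 1) * κ l :=
    Finset.single_le_sum (f := fun l => (l - 1) * κ l) (fun l _ => Nat.zero_le _) hjmem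
  have : n + 1 ≤ n := by
    calc n + 1 = k + (n - k + 1) := by omega
    _ ≤ k + (j - 1) * κ j := by
        have : n - k + 1 ≤ (j - 1) * κ j := by
          calc n - k + 1 ≤ j - 1 := by omega
          _ = (j - 1) * 1 := (mul_one _).symm
          _ ≤ (j - 1) * κ j := Nat.mul_le_mul_left _ hκ
        omega
    _ ≤ k + ∑ l ∈ Finset.Icc 1 n, (l - 1) * κ l := by omega
    _ = n := by rw [← hsplit, hw]
  omega


lemma trans_sum2 {κ : ℕ → ℕ}
    (hsupp : ∀ j, κ j ≠ 0 → j ∈ Finset.Icc 1 n)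
    (hhigh : ∀ j, n - k + 1 < j → κ j = 0)
    (G : ℕ → ℕ → ℕ) (hG : ∀ j, G j 0 = 0) :
    ∑ j : Fin (n - k + 1), G ((j : ℕ) + 1) (κ ((j : ℕ) + 1)) = ∑ j ∈ Finset.Icc 1 n, G j (κ j) := by
  have e1 : ∑ j : Fin (n - k + 1), G ((j : ℕ) + 1) (κ ((j : ℕ) + 1))
      = ∑ l ∈ Finset.range (n - k + 1), G (l + 1) (κ (l + 1)) :=
    Fin.sum_univ_eq_sum_range (fun l => G (l + 1) (κ (l + 1))) (n - k + 1)
  have e2 : ∑ l ∈ Finset.range (n - k + 1), G (l + 1) (κ (l + 1))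
      = ∑ l ∈ Finset.Icc 1 (n - k + 1), G l (κ l) := by
    rw [show Finset.Icc 1 (n - k + 1) = Finset.Ico 1 (n - k + 2) from by ext j; simp only [Finset.mem_Icc, Finset.mem_Ico]; omega,
      Finset.sum_Ico_eq_sum_range]
    refine Finset.sum_congr (by rw [show n - k + 2 - 1 = n - k + 1 from by omega]) fun l _ => by
      rw [Nat.add_comm 1 l]
  have key : ∀ m : ℕ, m ≤ n + 1 → (∀ j, ¬(1 ≤ j ∧ j ≤ m) → κ j = 0) →
      ∑ l ∈ Finset.Icc 1 m, G l (κ l) = ∑ l ∈ Finset.Icc 1 (n + 1), G l (κ l) := by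
    intro m hmn hm
    refine Finset.sum_subset (Finset.Icc_subset_Icc_right hmn) fun l hl hl' => ?_
    rw [hm l (by simp only [Finset.mem_Icc] at hl hl'; omega), hG]
  rw [e1, e2]
  rw [key (n - k + 1) (by omega) (fun j hj => by
    rcases Nat.eq_zero_or_pos j with h0 | h1
    · subst h0
      by_contra hne
      have := hsupp 0 hne
      simp [Finset.mem_Icc] at this
    · exact hhigh j (by omega)), ← key n (by omega) (fun j hj => by
    by_contra hne
    have := Finset.mem_Icc.mp (hsupp j hne)
    omega)]

lemma coeff_QQ_pow (x : ℕ → ℝ) (n k : ℕ) :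
    ((QQ x n) ^ k).coeff n = ∑ κ ∈ ((Finset.Icc 1 n).piAntidiag k).filter
        (fun κ => ∑ j ∈ Finset.Icc 1 n, j * κ j = n),
      (Nat.multinomial (Finset.Icc 1 n) κ : ℝ) *
        ∏ j ∈ Finset.Icc 1 n, (x j / j.factorial) ^ κ j := by
  rw [QQ, Finset.sum_pow_eq_sum_piAntidiag, Polynomial.finset_sum_coeff, Finset.sum_filter]
  refine Finset.sum_congr rfl fun κ hκ => ?_
  have hterm : (Nat.multinomial (Finset.Icc 1 n) κ : Polynomial ℝ) *
      ∏ j ∈ Finset.Icc 1 n, (Polynomial.C (x j / j.factorial) * Polynomial.X ^ j) ^ κ j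
      = Polynomial.C ((Nat.multinomial (Finset.Icc 1 n) κ : ℝ) *
          ∏ j ∈ Finset.Icc 1 n, (x j / j.factorial) ^ κ j) *
        Polynomial.X ^ (∑ j ∈ Finset.Icc 1 n, j * κ j) := by
    simp_rw [mul_pow, ← Polynomial.C_pow, ← pow_mul]
    rw [Finset.prod_mul_distrib, ← map_prod, Finset.prod_pow_eq_pow_sum]
    rw [map_mul, Polynomial.C_eq_natCast, mul_assoc]
  rw [hterm, Polynomial.coeff_C_mul, Polynomial.coeff_X_pow]
  by_cases h : ∑ j ∈ Finset.Icc 1 n, j * κ j = n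
  · rw [if_pos h, if_pos h.symm, mul_one]
  · rw [if_neg h, if_neg (fun hh => h hh.symm), mul_zero]


theorem bell_eq (x : ℕ → ℝ) (n k : ℕ) :
    (k.factorial : ℝ) * Bell n k x = (n.factorial : ℝ) * ((QQ x n) ^ k).coeff n := by
  rw [coeff_QQ_pow, Bell, Finset.mul_sum, Finset.mul_sum]
  refine Finset.sum_nbij' (toNat n k) (fun κ (j : Fin (n - k + 1)) => κ ((j : ℕ) + 1))
    ?_ ?_ ?_ ?_ ?_
  · -- forward membership
    intro i hi
    rw [Finset.mem_filter, Fintype.mem_piFinset] at hi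
    obtain ⟨hrange, hik, hin⟩ := hi
    rw [Finset.mem_filter, Finset.mem_piAntidiag]
    have hsum : ∑ j ∈ Finset.Icc 1 n, toNat n k i j = k :=
      (trans_sum hik hin (fun _ a => a) (fun _ => rfl)).trans hik
    have hsupp : ∀ j, toNat n k i j ≠ 0 → j ∈ Finset.Icc 1 n := by
      intro j hne
      rw [toNat] at hne
      by_cases hc : 1 ≤ j ∧ j ≤ n - k + 1
      · rcases Nat.eq_zero_or_pos k with hk0 | hk
        · exfalso
          apply hne
          rw [dif_pos hc]
          subst hk0
          exact Finset.sum_eq_zero_iff.mp hik _ (Finset.mem_univ _)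
        · have := k_le_n hik hin
          rw [Finset.mem_Icc]; omega
      · exact absurd (dif_neg hc) hne
    exact ⟨⟨hsum, hsupp⟩,
      (trans_sum hik hin (fun j a => j * a) (fun _ => mul_zero _)).trans hin⟩
  · -- backward membership
    intro κ hκ
    rw [Finset.mem_filter, Finset.mem_piAntidiag] at hκ
    obtain ⟨⟨hsum, hsupp⟩, hw⟩ := hκ
    have hsupp' : ∀ j, κ j ≠ 0 → j ∈ Finset.Icc 1 n := hsupp
    have hhigh : ∀ j, n - k + 1 < j → κ j = 0 := support_bound hsupp' hsum hw
    rw [Finset.mem_filter, Fintype.mem_piFinset]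
    have hkn : k ≤ n := by
      calc k = ∑ l ∈ Finset.Icc 1 n, κ l := hsum.symm
      _ ≤ ∑ l ∈ Finset.Icc 1 n, l * κ l := by
          refine Finset.sum_le_sum fun l hl => ?_
          have : 1 ≤ l := (Finset.mem_Icc.mp hl).1
          exact Nat.le_mul_of_pos_left (κ l) (by omega)
      _ = n := hw
    refine ⟨fun j => ?_, ?_, ?_⟩
    · show κ ((j : ℕ) + 1) ∈ Finset.range (n + 1)
      rw [Finset.mem_range]
      rcases Nat.eq_zero_or_pos (κ ((j : ℕ) + 1)) with h0 | h1
      · omega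
      · have hmem : ((j : ℕ) + 1) ∈ Finset.Icc 1 n := hsupp _ (by omega)
        have h2 : κ ((j : ℕ) + 1) ≤ k :=
          le_of_le_of_eq (Finset.single_le_sum (f := fun l => κ l)
            (fun l _ => Nat.zero_le _) hmem) hsum
        omega
    · exact (trans_sum2 hsupp' hhigh (fun _ a => a) (fun _ => rfl)).trans hsum
    · exact (trans_sum2 hsupp' hhigh (fun j a => j * a) (fun _ => mul_zero _)).trans hw
  · -- left inverse
    intro i hi
    funext j
    have hc : 1 ≤ (j : ℕ) + 1 ∧ (j : ℕ) + 1 ≤ n - k + 1 := ⟨by omega, by omega⟩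
    show toNat n k i ((j : ℕ) + 1) = i j
    rw [toNat, dif_pos hc]
    simp
  · -- right inverse
    intro κ hκ
    rw [Finset.mem_filter, Finset.mem_piAntidiag] at hκ
    obtain ⟨⟨hsum, hsupp⟩, hw⟩ := hκ
    have hhigh : ∀ j, n - k + 1 < j → κ j = 0 := support_bound hsupp hsum hw
    funext j
    rw [toNat]
    by_cases hc : 1 ≤ j ∧ j ≤ n - k + 1
    · rw [dif_pos hc]
      show κ (j - 1 + 1) = κ j
      congr 1
      omega
    · rw [dif_neg hc]
      rcases Nat.eq_zero_or_pos j with h0 | h1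
      · subst h0
        by_contra hne
        have := hsupp 0 (fun h => hne h.symm)
        simp [Finset.mem_Icc] at this
      · exact (hhigh j (by omega)).symm
  · -- term equality
    intro i hi
    rw [Finset.mem_filter, Fintype.mem_piFinset] at hi
    obtain ⟨hrange, hik, hin⟩ := hi
    have hfac : ∏ j ∈ Finset.Icc 1 n, ((toNat n k i j).factorial : ℝ)
        = ∏ j : Fin (n - k + 1), ((i j).factorial : ℝ) :=
      trans_prod hik hin (fun _ a => (a.factorial : ℝ)) (fun _ => by norm_num)
    have hpow : ∏ j ∈ Finset.Icc 1 n, (x j / (j.factorial : ℝ)) ^ (toNat n k i j)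
        = ∏ j : Fin (n - k + 1), (x ((j : ℕ) + 1) / ((((j : ℕ) + 1).factorial : ℝ))) ^ (i j) :=
      trans_prod hik hin (fun j a => (x j / (j.factorial : ℝ)) ^ a) (fun _ => pow_zero _)
    have hsum : ∑ j ∈ Finset.Icc 1 n, toNat n k i j = k :=
      (trans_sum hik hin (fun _ a => a) (fun _ => rfl)).trans hik
    have hmult : (∏ j ∈ Finset.Icc 1 n, ((toNat n k i j).factorial : ℝ)) *
        (Nat.multinomial (Finset.Icc 1 n) (toNat n k i) : ℝ) = (k.factorial : ℝ) := by
      have := Nat.multinomial_spec (Finset.Icc 1 n) (toNat n k i)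
      rw [hsum] at this
      exact_mod_cast congrArg (Nat.cast : ℕ → ℝ) this
    have hP : (∏ j : Fin (n - k + 1), ((i j).factorial : ℝ)) ≠ 0 := by
      refine Finset.prod_ne_zero_iff.mpr fun j _ => ?_
      exact_mod_cast (Nat.factorial_pos (i j)).ne'
    rw [hfac] at hmult
    rw [hpow] at *
    rw [← hmult]
    field_simp


noncomputable def AA (x : ℕ → ℝ) (m : ℕ) : ℝ :=
  ∑ i ∈ Finset.range (m + 1), (-1 : ℝ) ^ i * i.factorial * Bell m i x

lemma AA_eq (x : ℕ → ℝ) (m : ℕ) :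
    AA x m = ∑ i ∈ Finset.range (m + 1),
      (-1 : ℝ) ^ i * (m.factorial : ℝ) * ((QQ x m) ^ i).coeff m := by
  refine Finset.sum_congr rfl fun i _ => ?_
  rw [mul_assoc, mul_assoc, bell_eq]

lemma QQ_coeff_zero (x : ℕ → ℝ) (N : ℕ) : (QQ x N).coeff 0 = 0 := by
  rw [QQ_coeff]; simp

lemma AA_zero (x : ℕ → ℝ) : AA x 0 = 1 := by
  rw [AA_eq]
  simp

lemma AA_rec (x : ℕ → ℝ) (m : ℕ) (hm : 1 ≤ m) :
    AA x m = -∑ j ∈ Finset.Icc 1 m, (m.choose j : ℝ) * x j * AA x (m - j) := by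
  have stab : ∀ j ∈ Finset.Icc 1 m, ∀ i : ℕ,
      ((QQ x (m - j)) ^ i).coeff (m - j) = ((QQ x m) ^ i).coeff (m - j) := by
    intro j hj i
    refine coeff_pow_congr (fun l hl => ?_) i (m - j) le_rfl
    rw [QQ_coeff, QQ_coeff]
    by_cases h1 : 1 ≤ l
    · rw [if_pos ⟨h1, hl⟩, if_pos ⟨h1, by omega⟩]
    · rw [if_neg (fun h => h1 h.1), if_neg (fun h => h1 h.1)]
  have ext : ∀ j ∈ Finset.Icc 1 m, AA x (m - j) = ∑ i ∈ Finset.range (m + 1),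
      (-1 : ℝ) ^ i * ((m - j).factorial : ℝ) * ((QQ x m) ^ i).coeff (m - j) := by
    intro j hj
    rw [AA_eq]
    rw [Finset.sum_congr rfl fun i (_ : i ∈ Finset.range (m - j + 1)) => by
      rw [stab j hj i]]
    refine Finset.sum_subset (Finset.range_subset_range.mpr (by omega)) fun i hi hi' => ?_
    rw [Finset.mem_range] at hi hi'
    rw [coeff_pow_eq_zero (QQ_coeff_zero x m) (by omega), mul_zero]
  have key : ∀ i : ℕ, ∑ j ∈ Finset.Icc 1 m,
      (QQ x m).coeff j * ((QQ x m) ^ i).coeff (m - j) = ((QQ x m) ^ (i + 1)).coeff m := by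
    intro i
    rw [pow_succ', Polynomial.coeff_mul, Finset.Nat.sum_antidiagonal_eq_sum_range_succ_mk]
    refine Finset.sum_subset (fun a ha => Finset.mem_range.mpr
      (by have := (Finset.mem_Icc.mp ha).2; omega)) fun a ha ha' => ?_
    have ha0 : a = 0 := by
      rw [Finset.mem_range] at ha
      rw [Finset.mem_Icc] at ha'
      omega
    rw [ha0, QQ_coeff_zero, zero_mul]
  have hR : ∑ j ∈ Finset.Icc 1 m, (m.choose j : ℝ) * x j * AA x (m - j)
      = ∑ i ∈ Finset.range (m + 1), (-1 : ℝ) ^ i * (m.factorial : ℝ) *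
          ((QQ x m) ^ (i + 1)).coeff m := by
    calc ∑ j ∈ Finset.Icc 1 m, (m.choose j : ℝ) * x j * AA x (m - j)
        = ∑ j ∈ Finset.Icc 1 m, ∑ i ∈ Finset.range (m + 1),
            (m.choose j : ℝ) * x j * ((-1 : ℝ) ^ i * ((m - j).factorial : ℝ) *
              ((QQ x m) ^ i).coeff (m - j)) := by
          refine Finset.sum_congr rfl fun j hj => ?_
          rw [ext j hj, Finset.mul_sum]
      _ = ∑ i ∈ Finset.range (m + 1), ∑ j ∈ Finset.Icc 1 m,
            (m.choose j : ℝ) * x j * ((-1 : ℝ) ^ i * ((m - j).factorial : ℝ) *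
              ((QQ x m) ^ i).coeff (m - j)) := Finset.sum_comm
      _ = ∑ i ∈ Finset.range (m + 1), (-1 : ℝ) ^ i * (m.factorial : ℝ) *
            ∑ j ∈ Finset.Icc 1 m, (QQ x m).coeff j * ((QQ x m) ^ i).coeff (m - j) := by
          refine Finset.sum_congr rfl fun i _ => ?_
          rw [Finset.mul_sum]
          refine Finset.sum_congr rfl fun j hj => ?_
          have hj' := Finset.mem_Icc.mp hj
          have hQ : (QQ x m).coeff j = x j / (j.factorial : ℝ) := by
            rw [QQ_coeff, if_pos hj']
          have hnat : (m.choose j : ℝ) * (j.factorial : ℝ) * ((m - j).factorial : ℝ)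
              = (m.factorial : ℝ) := by
            exact_mod_cast congrArg (Nat.cast : ℕ → ℝ)
              (Nat.choose_mul_factorial_mul_factorial hj'.2)
          have hjfac : (j.factorial : ℝ) ≠ 0 := Nat.cast_ne_zero.mpr (Nat.factorial_ne_zero j)
          rw [hQ, ← hnat]
          field_simp
      _ = ∑ i ∈ Finset.range (m + 1), (-1 : ℝ) ^ i * (m.factorial : ℝ) *
            ((QQ x m) ^ (i + 1)).coeff m := by
          refine Finset.sum_congr rfl fun i _ => ?_
          rw [key i]
  rw [hR]
  rw [AA_eq, Finset.sum_range_succ']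
  have h0 : ((QQ x m) ^ 0).coeff m = 0 := by
    rw [pow_zero, Polynomial.coeff_one, if_neg (by omega)]
  rw [h0, Finset.sum_range_succ]
  rw [coeff_pow_eq_zero (QQ_coeff_zero x m) (Nat.lt_succ_self m)]
  simp only [mul_zero, add_zero]
  rw [← Finset.sum_neg_distrib]
  exact Finset.sum_congr rfl fun i _ => by ring

end trans

lemma idw_open {s : Set ℝ} (hs : IsOpen s) {f : ℝ → ℝ} {x : ℝ} (hx : x ∈ s) (n : ℕ) :
    iteratedDerivWithin n f s x = iteratedDeriv n f x := by
  rw [iteratedDerivWithin_eq_iteratedFDerivWithin, iteratedDeriv_eq_iteratedFDeriv,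
    iteratedFDerivWithin_of_isOpen n hs hx]

lemma hasDerivAt_iter {s : Set ℝ} (hs : IsOpen s) {f : ℝ → ℝ}
    (hf : ∀ m : ℕ, ContDiffOn ℝ m f s) {x : ℝ} (hx : x ∈ s) (k : ℕ) :
    HasDerivAt (iteratedDeriv k f) (iteratedDeriv (k + 1) f x) x := by
  have hdiff : DifferentiableOn ℝ (iteratedDerivWithin k f s) s :=
    (hf (k + 1)).differentiableOn_iteratedDerivWithin (by exact_mod_cast Nat.lt_succ_self k)
      hs.uniqueDiffOn
  have h1 : DifferentiableAt ℝ (iteratedDerivWithin k f s) x :=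
    (hdiff x hx).differentiableAt (hs.mem_nhds hx)
  have heq : iteratedDerivWithin k f s =ᶠ[𝓝 x] iteratedDeriv k f := by
    filter_upwards [hs.mem_nhds hx] with y hy
    exact idw_open hs hy k
  have h2 : DifferentiableAt ℝ (iteratedDeriv k f) x := by
    exact (Filter.EventuallyEq.differentiableAt_iff heq).mp h1
  have h3 := h2.hasDerivAt
  rw [iteratedDeriv_succ]
  exact h3


lemma pascal_sum (a b : ℕ → ℝ) (n : ℕ) :
    ∑ k ∈ Finset.range (n + 1),
        ((n.choose k : ℝ) * a (k + 1) * b (n - k) + (n.choose k : ℝ) * a k * b (n - k + 1))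
      = ∑ k ∈ Finset.range (n + 2), (((n + 1).choose k : ℝ)) * a k * b (n + 1 - k) := by
  rw [Finset.sum_add_distrib]
  conv_rhs => rw [Finset.sum_range_succ']
  have e1 : ∀ k ∈ Finset.range (n + 1),
      (((n + 1).choose (k + 1) : ℕ) : ℝ) * a (k + 1) * b (n + 1 - (k + 1))
        = (n.choose k : ℝ) * a (k + 1) * b (n - k)
          + (n.choose (k + 1) : ℝ) * a (k + 1) * b (n - k) := by
    intro k _
    have h4 : n + 1 - (k + 1) = n - k := by omega
    have h5 : (((n + 1).choose (k + 1) : ℕ) : ℝ)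
        = (n.choose k : ℝ) + (n.choose (k + 1) : ℝ) := by
      rw [Nat.choose_succ_succ]; push_cast; ring
    rw [h4, h5]; ring
  rw [Finset.sum_congr rfl e1, Finset.sum_add_distrib]
  have e2 : ∑ k ∈ Finset.range (n + 1), (n.choose k : ℝ) * a k * b (n - k + 1)
      = (∑ k ∈ Finset.range (n + 1), (n.choose (k + 1) : ℝ) * a (k + 1) * b (n - k))
        + (((n + 1).choose 0 : ℕ) : ℝ) * a 0 * b (n + 1 - 0) := by
    rw [Finset.sum_range_succ']
    rw [Finset.sum_range_succ (fun k => (n.choose (k + 1) : ℝ) * a (k + 1) * b (n - k))]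
    rw [Nat.choose_succ_self]
    simp only [Nat.cast_zero, zero_mul, add_zero, Nat.choose_zero_right, Nat.cast_one,
      Nat.sub_zero, Nat.add_sub_cancel]
    congr 1
    refine Finset.sum_congr rfl fun k hk => ?_
    rw [Finset.mem_range] at hk
    have h6 : n - (k + 1) + 1 = n - k := by omega
    rw [h6]
  rw [e2]
  ring

lemma leibniz_open {s : Set ℝ} (hs : IsOpen s) {f g : ℝ → ℝ}
    (hf : ∀ m : ℕ, ContDiffOn ℝ m f s) (hg : ∀ m : ℕ, ContDiffOn ℝ m g s) (n : ℕ) :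
    ∀ x ∈ s, iteratedDeriv n (fun t => f t * g t) x
      = ∑ k ∈ Finset.range (n + 1),
          (n.choose k : ℝ) * iteratedDeriv k f x * iteratedDeriv (n - k) g x := by
  induction n with
  | zero => intro x hx; simp
  | succ n IH =>
    intro x hx
    rw [iteratedDeriv_succ]
    have heq : iteratedDeriv n (fun t => f t * g t) =ᶠ[𝓝 x]
        fun y => ∑ k ∈ Finset.range (n + 1),
          (n.choose k : ℝ) * iteratedDeriv k f y * iteratedDeriv (n - k) g y := by
      filter_upwards [hs.mem_nhds hx] with y hy
      exact IH y hy
    rw [heq.deriv_eq]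
    have hD : HasDerivAt (fun y => ∑ k ∈ Finset.range (n + 1),
        (n.choose k : ℝ) * iteratedDeriv k f y * iteratedDeriv (n - k) g y)
        (∑ k ∈ Finset.range (n + 1),
          ((n.choose k : ℝ) * iteratedDeriv (k + 1) f x * iteratedDeriv (n - k) g x
            + (n.choose k : ℝ) * iteratedDeriv k f x * iteratedDeriv (n - k + 1) g x)) x := by
      refine HasDerivAt.fun_sum fun k _ => ?_
      have h1 := (hasDerivAt_iter hs hf hx k).const_mul ((n.choose k : ℝ))
      have h2 := hasDerivAt_iter hs hg hx (n - k)
      have h3 := h1.mul h2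
      exact h3
    rw [hD.deriv]
    exact pascal_sum (fun k => iteratedDeriv k f x) (fun k => iteratedDeriv k g x) n

lemma iter_zero_fun (j : ℕ) (x : ℝ) : iteratedDeriv j (fun _ : ℝ => (0 : ℝ)) x = 0 := by
  induction j generalizing x with
  | zero => simp
  | succ j IH =>
    rw [iteratedDeriv_succ']
    simp only [deriv_const']
    exact IH x

lemma iter_const {m : ℕ} (hm : m ≠ 0) (c x : ℝ) :
    iteratedDeriv m (fun _ : ℝ => c) x = 0 := by
  obtain ⟨j, rfl⟩ := Nat.exists_eq_succ_of_ne_zero hm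
  rw [iteratedDeriv_succ']
  simp only [deriv_const']
  exact iter_zero_fun j x

lemma contDiffOn_rpow_aff {c y : ℝ} {s : Set ℝ} (hpos : ∀ t ∈ s, 0 < 1 + c * t) (m : ℕ) :
    ContDiffOn ℝ m (fun t : ℝ => (1 + c * t) ^ y) s := by
  refine ContDiffOn.rpow_const_of_ne ?_ (fun t ht => (hpos t ht).ne')
  exact contDiffOn_const.add (contDiffOn_const.mul contDiffOn_id)

lemma iter_rpow_aff {c : ℝ} {s : Set ℝ} (hs : IsOpen s) (hpos : ∀ t ∈ s, 0 < 1 + c * t) :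
    ∀ (m : ℕ) (y : ℝ), ∀ x ∈ s, iteratedDeriv m (fun t : ℝ => (1 + c * t) ^ y) x
      = c ^ m * ff y m * (1 + c * x) ^ (y - m) := by
  intro m
  induction m with
  | zero =>
    intro y x hx
    simp [ff]
  | succ m IH =>
    intro y x hx
    rw [iteratedDeriv_succ']
    have hev : deriv (fun t : ℝ => (1 + c * t) ^ y) =ᶠ[𝓝 x]
        fun t => (c * y) * (1 + c * t) ^ (y - 1) := by
      filter_upwards [hs.mem_nhds hx] with t ht
      have hb : HasDerivAt (fun t : ℝ => 1 + c * t) c t := by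
        simpa using ((hasDerivAt_id t).const_mul c).const_add 1
      have hd := hb.rpow_const (p := y) (Or.inl (hpos t ht).ne')
      rw [hd.deriv]
    rw [Filter.EventuallyEq.iteratedDeriv_eq m hev]
    have hcm : iteratedDeriv m (fun t => (c * y) * (1 + c * t) ^ (y - 1)) x
        = (c * y) * iteratedDeriv m (fun t => (1 + c * t) ^ (y - 1)) x := by
      rw [← idw_open hs hx, ← idw_open hs hx,
        iteratedDerivWithin_const_mul hx hs.uniqueDiffOn _ (contDiffOn_rpow_aff hpos m x hx)]
    rw [hcm, IH (y - 1) x hx]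
    have hff : ff y (m + 1) = y * ff (y - 1) m := by
      rw [ff, ff, Finset.prod_range_succ']
      rw [mul_comm]
      congr 1
      · norm_num
      · refine Finset.prod_congr rfl fun i _ => ?_
        push_cast; ring
    have hexp : y - 1 - (m : ℝ) = y - ((m + 1 : ℕ) : ℝ) := by push_cast; ring
    rw [hff, ← hexp]
    ring

end Krw

section main
open Krw

theorem stmt16 (lam β p q r : ℝ) (hlam : lam < 0) (hβ : 0 < β)
    (hp : 0 < p) (hp1 : p < 1) (hq : q = 1 - p) (hr : 0 < r) (n : ℕ) (x : ℝ) :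
    K lam β q r n x
      = ∑ k ∈ Finset.range (n + 1),
          (n.choose k : ℝ) *
            (∑ i ∈ Finset.range (n - k + 1),
              (-1 : ℝ) ^ i * i.factorial * Bell (n - k) i (gg lam β q r)) *
          br q x k := by
  classical
  set s : Set ℝ := ({t : ℝ | 0 < 1 + t} ∩ {t : ℝ | 0 < 1 + q * t}) ∩
    {t : ℝ | 0 < 1 + lam * r * Real.log (1 + q * t)} with hs_def
  have hmem : ∀ t, t ∈ s ↔ (0 < 1 + t ∧ 0 < 1 + q * t) ∧
      0 < 1 + lam * r * Real.log (1 + q * t) := fun t => Iff.rfl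
  have hu_open : IsOpen ({t : ℝ | 0 < 1 + t} ∩ {t : ℝ | 0 < 1 + q * t}) := by
    refine IsOpen.inter ?_ ?_
    · exact isOpen_lt continuous_const (by continuity)
    · exact isOpen_lt continuous_const (by continuity)
  have hopen : IsOpen s := by
    rw [hs_def]
    have hcont : ContinuousOn (fun t : ℝ => 1 + lam * r * Real.log (1 + q * t))
        ({t : ℝ | 0 < 1 + t} ∩ {t : ℝ | 0 < 1 + q * t}) := by
      refine continuousOn_const.add (continuousOn_const.mul (ContinuousOn.log ?_ ?_))
      · exact (by continuity : Continuous fun t : ℝ => 1 + q * t).continuousOn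
      · exact fun t ht => ht.2.ne'
    have := hcont.isOpen_inter_preimage hu_open (isOpen_Ioi (a := (0:ℝ)))
    exact this
  have h0 : (0 : ℝ) ∈ s := by
    refine ⟨⟨?_, ?_⟩, ?_⟩ <;> simp [Real.log_one]
  -- the functions
  set G : ℝ → ℝ := fun t => (1 + lam * r * Real.log (1 + q * t)) ^ (-β / lam) with hG_def
  set H : ℝ → ℝ := fun t => (1 + lam * r * Real.log (1 + q * t)) ^ (β / lam) with hH_def
  have hpos1 : ∀ t ∈ s, 0 < 1 + (1:ℝ) * t := fun t ht => by
    rw [one_mul]; exact ht.1.1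
  have hposq : ∀ t ∈ s, 0 < 1 + q * t := fun t ht => ht.1.2
  have hsm1 : ∀ m : ℕ, ContDiffOn ℝ m (fun t : ℝ => (1 + 1 * t) ^ x) s :=
    fun m => contDiffOn_rpow_aff hpos1 m
  have hsm2 : ∀ m : ℕ, ContDiffOn ℝ m (fun t : ℝ => (1 + q * t) ^ (-x)) s :=
    fun m => contDiffOn_rpow_aff hposq m
  have hsmF : ∀ m : ℕ, ContDiffOn ℝ m (fun t : ℝ => (1 + 1 * t) ^ x * (1 + q * t) ^ (-x)) s :=
    fun m => (hsm1 m).mul (hsm2 m)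
  have hsm_inner : ∀ m : ℕ, ContDiffOn ℝ m
      (fun t : ℝ => 1 + lam * r * Real.log (1 + q * t)) s := by
    intro m
    refine contDiffOn_const.add (contDiffOn_const.mul (ContDiffOn.log ?_ ?_))
    · exact contDiffOn_const.add (contDiffOn_const.mul contDiffOn_id)
    · exact fun t ht => (hposq t ht).ne'
  have hsmG : ∀ m : ℕ, ContDiffOn ℝ m G s :=
    fun m => ContDiffOn.rpow_const_of_ne (hsm_inner m) (fun t ht => ht.2.ne')
  have hsmH : ∀ m : ℕ, ContDiffOn ℝ m H s :=
    fun m => ContDiffOn.rpow_const_of_ne (hsm_inner m) (fun t ht => ht.2.ne')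
  -- derivatives of the Krawtchouk factor
  have hF : ∀ k : ℕ, iteratedDeriv k (fun t : ℝ => (1 + 1 * t) ^ x * (1 + q * t) ^ (-x)) 0
      = br q x k := by
    intro k
    rw [leibniz_open hopen hsm1 hsm2 k 0 h0]
    have hval1 : ∀ j : ℕ, iteratedDeriv j (fun t : ℝ => (1 + 1 * t) ^ x) 0 = ff x j := by
      intro j
      rw [iter_rpow_aff hopen hpos1 j x 0 h0]
      norm_num
    have hval2 : ∀ j : ℕ, iteratedDeriv j (fun t : ℝ => (1 + q * t) ^ (-x)) 0
        = q ^ j * ff (-x) j := by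
      intro j
      rw [iter_rpow_aff hopen hposq j (-x) 0 h0]
      norm_num
    have hsum : ∑ j ∈ Finset.range (k + 1),
        (k.choose j : ℝ) * iteratedDeriv j (fun t : ℝ => (1 + 1 * t) ^ x) 0 *
          iteratedDeriv (k - j) (fun t : ℝ => (1 + q * t) ^ (-x)) 0
        = ∑ j ∈ Finset.range (k + 1),
          (k.choose j : ℝ) * ff x j * (q ^ (k - j) * ff (-x) (k - j)) := by
      refine Finset.sum_congr rfl fun j _ => ?_
      rw [hval1 j, hval2 (k - j)]
    rw [hsum, br]
    rw [← Finset.sum_range_reflect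
      (fun j => (k.choose j : ℝ) * ff x j * (q ^ (k - j) * ff (-x) (k - j))) (k + 1)]
    refine Finset.sum_congr rfl fun j hj => ?_
    rw [Finset.mem_range] at hj
    have h1 : k + 1 - 1 - j = k - j := by omega
    have h2 : k - (k - j) = j := by omega
    rw [h1, h2]
    rw [show k.choose (k - j) = k.choose j from Nat.choose_symm (by omega)]
    ring
  -- derivatives of G via the reciprocal recurrence
  have hgg0 : gg lam β q r 0 = 1 := by
    rw [gg, iteratedDeriv_zero]
    norm_num
  have hG_iter : ∀ m : ℕ, iteratedDeriv m G 0 = AA (gg lam β q r) m := by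
    intro m
    induction m using Nat.strong_induction_on with
    | _ m IH =>
      rcases Nat.eq_zero_or_pos m with hm0 | hm
      · subst hm0
        rw [iteratedDeriv_zero, AA_zero, hG_def]
        norm_num
      · have hHG1 : ∀ t ∈ s, H t * G t = 1 := by
          intro t ht
          rw [hH_def, hG_def]
          show (1 + lam * r * Real.log (1 + q * t)) ^ (β / lam) *
            (1 + lam * r * Real.log (1 + q * t)) ^ (-β / lam) = 1
          rw [neg_div, ← Real.rpow_add ht.2, add_neg_cancel, Real.rpow_zero]
        have hiter0 : iteratedDeriv m (fun t => H t * G t) 0 = 0 := by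
          have hev : (fun t => H t * G t) =ᶠ[𝓝 (0:ℝ)] fun _ => (1:ℝ) := by
            filter_upwards [hopen.mem_nhds h0] with t ht
            exact hHG1 t ht
          rw [Filter.EventuallyEq.iteratedDeriv_eq m hev, iter_const (by omega) 1 0]
        rw [leibniz_open hopen hsmH hsmG m 0 h0] at hiter0
        have hHgg : ∀ j : ℕ, iteratedDeriv j H 0 = gg lam β q r j := fun j => rfl
        rw [Finset.sum_range_succ'] at hiter0
        simp only [hHgg, hgg0, Nat.choose_zero_right, Nat.cast_one, Nat.sub_zero] at hiter0
        have hGm : iteratedDeriv m G 0 = -∑ j ∈ Finset.range m,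
            ((m.choose (j + 1) : ℝ)) * gg lam β q r (j + 1) * iteratedDeriv (m - (j + 1)) G 0 := by
          linarith [hiter0]
        rw [hGm]
        rw [AA_rec _ m hm]
        rw [show Finset.Icc 1 m = Finset.Ico 1 (m + 1) from by rw [Finset.Ico_add_one_right_eq_Icc],
          Finset.sum_Ico_eq_sum_range]
        rw [show m + 1 - 1 = m from rfl]
        rw [neg_inj]
        refine Finset.sum_congr rfl fun j hj => ?_
        rw [Finset.mem_range] at hj
        rw [IH (m - (j + 1)) (by omega)]
        rw [show 1 + j = j + 1 from by omega]
  -- assemble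
  have hEv : (fun t : ℝ => ((1 + t) / (1 + q * t)) ^ x *
      (1 + lam * r * Real.log (1 + q * t)) ^ (-β / lam)) =ᶠ[𝓝 (0:ℝ)]
      (fun t => ((1 + 1 * t) ^ x * (1 + q * t) ^ (-x)) * G t) := by
    filter_upwards [hopen.mem_nhds h0] with t ht
    have h1 : ((1 + t) / (1 + q * t)) ^ x = (1 + 1 * t) ^ x * (1 + q * t) ^ (-x) := by
      rw [one_mul, Real.div_rpow ht.1.1.le ht.1.2.le, Real.rpow_neg ht.1.2.le, div_eq_mul_inv]
    rw [h1, hG_def]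
  rw [K, Filter.EventuallyEq.iteratedDeriv_eq n hEv]
  rw [leibniz_open hopen hsmF hsmG n 0 h0]
  refine Finset.sum_congr rfl fun k hk => ?_
  rw [hF k, hG_iter (n - k)]
  rw [AA]
  ring

end main
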